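/- Let k ≥ 2 and let c be a proper total colouring with k+1 colours of H_k (K_{k,k} minus one vertex of the larger side, partite sets X of size k and Y of size k−1). Then for every vertex x ∈ X there is exactly one colour in {0,...,k} that does not appear on x or on any edge incident with x, and this missing colour is the same for all vertices of X, namely the common colour of the vertices in Y. -/

import Mathlib

open SimpleGraph

/-- A proper total colouring of `G` with `p` colours: vertex colours `cv`,
edge colours `ce` (symmetric on adjacent pairs); adjacent vertices, adjacent
edges and incident vertex-edge pairs get distinct colours. -/
def IsTotalColoring {V : Type*} (G : SimpleGraph V) (p : ℕ)
    (cv : V → Fin p) (ce : V → V → Fin p) : Prop :=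
  (∀ u v, G.Adj u v → ce u v = ce v u) ∧
  (∀ u v, G.Adj u v → cv u ≠ cv v) ∧
  (∀ u v w, G.Adj u v → G.Adj u w → v ≠ w → ce u v ≠ ce u w) ∧
  (∀ u v, G.Adj u v → ce u v ≠ cv u ∧ ce u v ≠ cv v)

/-- circular distance condition: `q ≤ |a - b| ≤ p - q`. -/
def circOk (p q a b : ℕ) : Prop :=
  q ≤ max a b - min a b ∧ max a b - min a b ≤ p - q

/-- A `(p,q)`-total colouring of `G`. -/
def IsCircTotalColoring {V : Type*} (G : SimpleGraph V) (p q : ℕ)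
    (cv : V → ℕ) (ce : V → V → ℕ) : Prop :=
  (∀ v, cv v < p) ∧
  (∀ u v, G.Adj u v → ce u v < p) ∧
  (∀ u v, G.Adj u v → ce u v = ce v u) ∧
  (∀ u v, G.Adj u v → circOk p q (cv u) (cv v)) ∧
  (∀ u v w, G.Adj u v → G.Adj u w → v ≠ w → circOk p q (ce u v) (ce u w)) ∧
  (∀ u v, G.Adj u v → circOk p q (ce u v) (cv u) ∧ circOk p q (ce u v) (cv v))

/-- The circular total chromatic number of `G`. -/
noncomputable def circTotalChromatic {V : Type*} (G : SimpleGraph V) : ℝ :=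
  sInf {x : ℝ | ∃ p q : ℕ, 0 < q ∧
    (∃ cv ce, IsCircTotalColoring G p q cv ce) ∧ x = (p : ℝ) / q}

/-- The chain graph `G_{k,n}`: `n` blocks, each a copy of `K_{k,k-1}` with
partite sets `Fin k` (the `X`-side) and `Fin (k-1)` (the `Y`-side); in block `i`
the designated link vertices are `x_i = (i, inl 0)` and `x'_i = (i, inl 1)`;
the extra vertex `u` is `none`, joined to `x'_1` and `x_n`, and `x_i` is joined
to `x'_{i+1}`. -/
def Gkn (k n : ℕ) : SimpleGraph (Option (Fin n × (Fin k ⊕ Fin (k - 1)))) :=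
  SimpleGraph.fromRel (fun a b =>
    (∃ (i : Fin n) (x : Fin k) (y : Fin (k - 1)),
        a = some (i, Sum.inl x) ∧ b = some (i, Sum.inr y)) ∨
    (∃ (i j : Fin n) (x x' : Fin k), (j : ℕ) = (i : ℕ) + 1 ∧ (x : ℕ) = 0 ∧ (x' : ℕ) = 1 ∧
        a = some (i, Sum.inl x) ∧ b = some (j, Sum.inl x')) ∨
    (∃ (i : Fin n) (x' : Fin k), (i : ℕ) = 0 ∧ (x' : ℕ) = 1 ∧
        a = none ∧ b = some (i, Sum.inl x')) ∨
    (∃ (i : Fin n) (x : Fin k), (i : ℕ) = n - 1 ∧ (x : ℕ) = 0 ∧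
        a = some (i, Sum.inl x) ∧ b = none))

theorem stmt2 (k : ℕ) (hk : 2 ≤ k)
    (cv : Fin k ⊕ Fin (k - 1) → Fin (k + 1))
    (ce : (Fin k ⊕ Fin (k - 1)) → (Fin k ⊕ Fin (k - 1)) → Fin (k + 1))
    (h : IsTotalColoring (completeBipartiteGraph (Fin k) (Fin (k - 1))) (k + 1) cv ce) :
    ∃ a : Fin (k + 1), (∀ j : Fin (k - 1), cv (Sum.inr j) = a) ∧
      ∀ i : Fin k,
        {b : Fin (k + 1) | b ≠ cv (Sum.inl i) ∧
          ∀ j : Fin (k - 1), b ≠ ce (Sum.inl i) (Sum.inr j)} = {a} := by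
  obtain ⟨hsym, hvv, hee, hve⟩ := h
  have hadj : ∀ (i : Fin k) (j : Fin (k - 1)),
      (completeBipartiteGraph (Fin k) (Fin (k - 1))).Adj (Sum.inl i) (Sum.inr j) := by
    intro i j; simp
  -- Step 1: `cv ∘ inl` is injective.
  have hinj : Function.Injective (fun i : Fin k => cv (Sum.inl i)) := by
    intro x1 x2 hc
    simp only at hc
    by_contra hne
    have hx' : ∀ y : Fin (k - 1), ∃ x' : Fin k,
        ce (Sum.inl x') (Sum.inr y) = cv (Sum.inl x1) := by
      intro y
      set f : Option (Fin k) → Fin (k + 1) :=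
        fun o => o.elim (cv (Sum.inr y)) (fun x => ce (Sum.inl x) (Sum.inr y)) with hf
      have finj : Function.Injective f := by
        intro o1 o2 he
        match o1, o2 with
        | none, none => rfl
        | none, some x => exact absurd he.symm (hve _ _ (hadj x y)).2
        | some x, none => exact absurd he (hve _ _ (hadj x y)).2
        | some x, some x' =>
          by_contra hne'
          have hxx' : x ≠ x' := by simpa using hne'
          have h2 := hee (Sum.inr y) (Sum.inl x) (Sum.inl x')
            ((hadj x y).symm) ((hadj x' y).symm) (by simp [hxx'])
          rw [hsym _ _ ((hadj x y).symm), hsym _ _ ((hadj x' y).symm)] at h2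
          exact h2 he
      have fsurj : Function.Surjective f :=
        ((Fintype.bijective_iff_injective_and_card f).2 ⟨finj, by simp⟩).2
      obtain ⟨o, ho⟩ := fsurj (cv (Sum.inl x1))
      match o with
      | none => exact absurd ho (hvv _ _ (hadj x1 y)).symm
      | some x' => exact ⟨x', ho⟩
    choose φ hφ using hx'
    have hφinj : Function.Injective φ := by
      intro y1 y2 he
      by_contra hne'
      have h2 := hee (Sum.inl (φ y1)) (Sum.inr y1) (Sum.inr y2)
        (hadj _ _) (by rw [he]; exact hadj _ _) (by simp [hne'])
      exact h2 (by rw [hφ y1]; conv_rhs => rw [he, hφ y2])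
    have hφx1 : ∀ y, φ y ≠ x1 := by
      intro y hyx
      have h2 := (hve _ _ (hadj (φ y) y)).1
      rw [hφ y, hyx] at h2
      exact h2 rfl
    have hφx2 : ∀ y, φ y ≠ x2 := by
      intro y hyx
      have h2 := (hve _ _ (hadj (φ y) y)).1
      rw [hφ y, hyx] at h2
      exact h2 hc
    have hcard : (Finset.univ : Finset (Fin (k - 1))).card ≤
        ((Finset.univ : Finset (Fin k)) \ {x1, x2}).card := by
      apply Finset.card_le_card_of_injOn φ
      · intro y _
        simp only [Finset.coe_sdiff, Set.mem_diff, Finset.coe_insert, Finset.coe_singleton, Set.mem_insert_iff, Set.mem_singleton_iff, Finset.coe_univ, Set.mem_univ, Finset.mem_sdiff, Finset.mem_univ, Finset.mem_insert,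
          Finset.mem_singleton, true_and]
        push_neg
        exact ⟨hφx1 y, hφx2 y⟩
      · exact hφinj.injOn
    rw [Finset.card_sdiff_of_subset (by simp), Finset.card_univ, Finset.card_univ,
      Finset.card_pair hne] at hcard
    simp only [Fintype.card_fin] at hcard
    omega
  -- Step 2: the unique colour `a` missing on the X-side.
  set S : Finset (Fin (k + 1)) :=
    Finset.image (fun i : Fin k => cv (Sum.inl i)) Finset.univ with hS
  have hScard : S.card = k := by
    rw [hS, Finset.card_image_of_injective _ hinj, Finset.card_univ, Fintype.card_fin]
  have hcompl : Sᶜ.card = 1 := by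
    rw [Finset.card_compl, hScard, Fintype.card_fin]
    omega
  obtain ⟨a, ha⟩ := Finset.card_eq_one.1 hcompl
  have haS : a ∉ S := by
    have : a ∈ Sᶜ := by rw [ha]; simp
    simpa using this
  -- Step 3: every Y-vertex has colour `a`.
  have hY : ∀ j : Fin (k - 1), cv (Sum.inr j) = a := by
    intro j
    have hmem : cv (Sum.inr j) ∈ Sᶜ := by
      rw [Finset.mem_compl, hS]
      simp only [Finset.mem_image, Finset.mem_univ, true_and, not_exists]
      intro i hi
      exact (hvv _ _ (hadj i j)) hi
    rw [ha] at hmem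
    simpa using hmem
  refine ⟨a, hY, fun i => ?_⟩
  have haicv : a ≠ cv (Sum.inl i) := by
    intro hai
    exact haS (by rw [hai, hS]; exact Finset.mem_image_of_mem _ (Finset.mem_univ i))
  have haice : ∀ j : Fin (k - 1), a ≠ ce (Sum.inl i) (Sum.inr j) := by
    intro j hae
    exact (hve _ _ (hadj i j)).2 (by rw [← hae, hY j])
  ext b
  simp only [Set.mem_setOf_eq, Set.mem_singleton_iff]
  constructor
  · rintro ⟨hb1, hb2⟩
    by_contra hba
    set T : Finset (Fin (k + 1)) := insert (cv (Sum.inl i))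
      (Finset.image (fun j : Fin (k - 1) => ce (Sum.inl i) (Sum.inr j)) Finset.univ) with hT
    have hceinj : Function.Injective
        (fun j : Fin (k - 1) => ce (Sum.inl i) (Sum.inr j)) := by
      intro j1 j2 he
      by_contra hne'
      exact hee (Sum.inl i) (Sum.inr j1) (Sum.inr j2) (hadj _ _) (hadj _ _)
        (by simp [hne']) he
    have hTcard : T.card = k := by
      rw [hT, Finset.card_insert_of_notMem, Finset.card_image_of_injective _ hceinj,
        Finset.card_univ, Fintype.card_fin]
      · omega
      · simp only [Finset.mem_image, Finset.mem_univ, true_and, not_exists]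
        intro j he
        exact (hve _ _ (hadj i j)).1 he
    have haT : a ∉ T := by
      rw [hT]
      simp only [Finset.mem_insert, Finset.mem_image, Finset.mem_univ, true_and,
        not_or, not_exists]
      exact ⟨haicv, fun j he => haice j he.symm⟩
    have hbT : b ∉ T := by
      rw [hT]
      simp only [Finset.mem_insert, Finset.mem_image, Finset.mem_univ, true_and,
        not_or, not_exists]
      exact ⟨hb1, fun j he => hb2 j he.symm⟩
    have hbig : (insert a (insert b T)).card ≤ Fintype.card (Fin (k + 1)) :=
      Finset.card_le_univ _
    rw [Finset.card_insert_of_notMem (by simp only [Finset.mem_insert, not_or]; exact ⟨fun h => hba h.symm, haT⟩),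
      Finset.card_insert_of_notMem hbT, hTcard, Fintype.card_fin] at hbig
    omega
  · rintro rfl
    exact ⟨haicv, haice⟩
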